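/- For a ∀² HyperLTL formula φ and traces t, t', if the language inclusions L(M_φ[t/π₁]) ⊆ L(M_φ[t'/π₁]) and L(M_φ[t/π₂]) ⊆ L(M_φ[t'/π₂]) hold, then t dominates t'. Formally: for ψ : α → α → Prop, if (∀ s : α, ψ t s → ψ t' s) and (∀ s : α, ψ s t → ψ s t'), then for every trace set T' with t ∈ T', (∀ a ∈ T', ∀ b ∈ T', ψ a b) ↔ (∀ a ∈ T' ∪ {t'}, ∀ b ∈ T' ∪ {t'}, ψ a b). -/

import Mathlib

theorem forall2_dominance {α : Type*} (ψ : α → α → Prop) (t t' : α)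
    (h₁ : ∀ s : α, ψ t s → ψ t' s) (h₂ : ∀ s : α, ψ s t → ψ s t') :
    ∀ T' : Set α, t ∈ T' →
      ((∀ a ∈ T', ∀ b ∈ T', ψ a b) ↔
        (∀ a ∈ T' ∪ {t'}, ∀ b ∈ T' ∪ {t'}, ψ a b)) := by
  intro T' ht
  constructor
  · intro h a ha b hb
    rcases ha with ha | ha <;> rcases hb with hb | hb <;>
      simp -failIfUnchanged only [Set.mem_singleton_iff] at *
    · exact h a ha b hb
    · exact hb ▸ h₂ a (h a ha t ht)
    · exact ha ▸ h₁ b (h t ht b hb)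
    · exact ha ▸ hb ▸ h₂ t' (h₁ t (h t ht t ht))
  · intro h a ha b hb
    exact h a (Or.inl ha) b (Or.inl hb)
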